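/- Let p > 1, N ≥ 1, and let η, ξ ∈ ℝ^N satisfy |η−ξ| + |ξ| > 0. Then Φ_p(η,ξ)·η ≥ min{p−1, 2^{2−p}} (|η−ξ| + |ξ|)^{p−2} |η|². -/

import Mathlib

open Real NNReal

lemma aux_mul {x p : ℝ} (hx : 0 ≤ x) (hp : 1 < p) : x ^ (p - 2) * x = x ^ (p - 1) := by
  rcases eq_or_lt_of_le hx with h0 | h0
  · rw [← h0, mul_zero, Real.zero_rpow (by linarith)]
  · rw [← Real.rpow_add_one (ne_of_gt h0) (p - 2)]; ring_nf

lemma aux_mul' {x p : ℝ} (hx : 0 ≤ x) (hp : 1 < p) : x ^ (p - 1) * x = x ^ p := by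
  rcases eq_or_lt_of_le hx with h0 | h0
  · rw [← h0, mul_zero, Real.zero_rpow (by linarith)]
  · rw [← Real.rpow_add_one (ne_of_gt h0) (p - 1)]; ring_nf

lemma L1 {p s t : ℝ} (hp : 1 < p) (hs : 0 ≤ s) (ht : 0 ≤ t) :
    min (p - 1) (2 ^ (2 - p)) * (s + t) ^ (p - 1) ≤ s ^ (p - 1) + t ^ (p - 1) := by
  rcases le_total p 2 with h2 | h2
  · have key : (s + t) ^ (p - 1) ≤ s ^ (p - 1) + t ^ (p - 1) := by
      have := NNReal.rpow_add_le_add_rpow (s.toNNReal) (t.toNNReal)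
        (by linarith : (0:ℝ) ≤ p - 1) (by linarith)
      have h1 : ((s.toNNReal + t.toNNReal : ℝ≥0) : ℝ) = s + t := by
        simp [Real.coe_toNNReal _ hs, Real.coe_toNNReal _ ht]
      calc (s + t) ^ (p - 1) = (((s.toNNReal + t.toNNReal : ℝ≥0) : ℝ)) ^ (p - 1) := by rw [h1]
        _ = (((s.toNNReal + t.toNNReal) ^ (p-1) : ℝ≥0) : ℝ) := by
            rw [NNReal.coe_rpow]
        _ ≤ ((s.toNNReal ^ (p-1) + t.toNNReal ^ (p-1) : ℝ≥0) : ℝ) := by exact_mod_cast this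
        _ = s ^ (p-1) + t ^ (p-1) := by
            push_cast [NNReal.coe_rpow, Real.coe_toNNReal _ hs, Real.coe_toNNReal _ ht]; ring
    have hmin : min (p - 1) (2 ^ (2 - p)) ≤ 1 := le_trans (min_le_left _ _) (by linarith)
    have hmin0 : 0 ≤ min (p - 1) (2 ^ (2 - p)) :=
      le_min (by linarith) (le_of_lt (Real.rpow_pos_of_pos (by norm_num) _))
    have hpos : (0:ℝ) ≤ (s + t) ^ (p - 1) := Real.rpow_nonneg (by linarith) _
    nlinarith [hpos]
  · have hq : (1:ℝ) ≤ p - 1 := by linarith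
    have conv := (convexOn_rpow (p := p - 1) hq).2 (Set.mem_Ici.2 hs) (Set.mem_Ici.2 ht)
      (by norm_num : (0:ℝ) ≤ 1/2) (by norm_num : (0:ℝ) ≤ 1/2) (by norm_num)
    simp only [smul_eq_mul] at conv
    have h1 : (1/2*s + 1/2*t) = (s+t)/2 := by ring
    rw [h1] at conv
    have h2 : ((s+t)/2) ^ (p-1) = (s+t)^(p-1) * 2^(1-p) := by
      rw [Real.div_rpow (by linarith) (by norm_num),
        show (1:ℝ) - p = -(p-1) by ring, Real.rpow_neg (by norm_num), div_eq_mul_inv]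
    rw [h2] at conv
    have hmin : min (p - 1) (2 ^ (2 - p)) ≤ 2 ^ (2 - p) := min_le_right _ _
    have h3 : (2:ℝ) ^ (2 - p) = 2 * 2 ^ (1 - p) := by
      rw [show (2:ℝ) - p = 1 + (1 - p) by ring, Real.rpow_add (by norm_num), Real.rpow_one]
    have hpos : (0:ℝ) ≤ (s + t) ^ (p - 1) := Real.rpow_nonneg (by linarith) _
    calc min (p - 1) (2 ^ (2 - p)) * (s + t) ^ (p - 1)
        ≤ 2 ^ (2 - p) * (s + t) ^ (p - 1) := mul_le_mul_of_nonneg_right hmin hpos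
      _ = 2 * ((s+t)^(p-1) * 2^(1-p)) := by rw [h3]; ring
      _ ≤ 2 * (1/2 * s^(p-1) + 1/2 * t^(p-1)) := by linarith [conv]
      _ = s^(p-1) + t^(p-1) := by ring

lemma aux_mul2 {x p : ℝ} (hx : 0 ≤ x) (hp : 1 < p) : x ^ (p - 2) * x ^ 2 = x ^ p := by
  have : x ^ (2:ℕ) = x * x := sq x
  rw [this, ← mul_assoc, aux_mul hx hp, aux_mul' hx hp]

lemma L2' {p s t : ℝ} (hp : 1 < p) (ht : 0 ≤ t) (hts : t ≤ s) :
    min (p - 1) (2 ^ (2 - p)) * (s + t) ^ (p - 2) * (s - t) ^ 2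
      ≤ (s ^ (p - 1) - t ^ (p - 1)) * (s - t) := by
  rcases eq_or_lt_of_le hts with rfl | hlt
  · simp
  · have hs : 0 < s := lt_of_le_of_lt ht hlt
    have hst : 0 < s + t := by linarith
    rcases le_total p 2 with h2 | h2
    · -- case 1 < p ≤ 2 : min = p - 1 side
      have hmin : min (p - 1) (2 ^ (2 - p)) ≤ p - 1 := min_le_left _ _
      have hmono : (s + t) ^ (p - 2) ≤ s ^ (p - 2) :=
        Real.rpow_le_rpow_of_nonpos hs (by linarith) (by linarith)
      -- Bernoulli: t^(p-1) ≤ s^(p-1) + (p-1) * s^(p-2) * (t - s)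
      have bern : t ^ (p - 1) ≤ s ^ (p - 1) + (p - 1) * s ^ (p - 2) * (t - s) := by
        rcases eq_or_lt_of_le ht with rfl | ht0
        · rw [Real.zero_rpow (by linarith : p - 1 ≠ 0)]
          have h1 : s ^ (p - 2) * s = s ^ (p - 1) := aux_mul hs.le hp
          nlinarith [Real.rpow_nonneg hs.le (p - 1)]
        · have hx : (-1:ℝ) ≤ t / s - 1 := by
            have : 0 < t / s := div_pos ht0 hs
            linarith
          have hb := rpow_one_add_le_one_add_mul_self hx
            (by linarith : (0:ℝ) ≤ p - 1) (by linarith : p - 1 ≤ 1)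
          rw [show 1 + (t / s - 1) = t / s by ring] at hb
          -- hb : (t/s)^(p-1) ≤ 1 + (p-1)*(t/s-1)
          have hdiv : (t / s) ^ (p - 1) = t ^ (p - 1) / s ^ (p - 1) :=
            Real.div_rpow ht0.le hs.le (p - 1)
          have hspos : 0 < s ^ (p - 1) := Real.rpow_pos_of_pos hs _
          have h1 : s ^ (p - 2) * s = s ^ (p - 1) := aux_mul hs.le hp
          rw [hdiv, div_le_iff₀ hspos] at hb
          -- hb : t^(p-1) ≤ (1 + (p-1)*(t/s-1)) * s^(p-1)
          have hexp : (1 + (p - 1) * (t / s - 1)) * s ^ (p - 1)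
              = s ^ (p - 1) + (p - 1) * s ^ (p - 2) * (t - s) := by
            field_simp
            linear_combination (p - 1) * (s - t) * h1
          rw [hexp] at hb
          exact hb
      have hfac : 0 ≤ (s + t) ^ (p - 2) := Real.rpow_nonneg hst.le _
      have step : (p - 1) * s ^ (p - 2) * (s - t) ≤ s ^ (p - 1) - t ^ (p - 1) := by nlinarith
      have hsp : 0 ≤ s ^ (p - 2) := Real.rpow_nonneg hs.le _
      nlinarith [mul_le_mul_of_nonneg_right step (by linarith : (0:ℝ) ≤ s - t),
        mul_le_mul_of_nonneg_right hmono (mul_nonneg (by linarith : (0:ℝ) ≤ p - 1) (sq_nonneg (s-t))),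
        mul_le_mul_of_nonneg_right hmin (by positivity : (0:ℝ) ≤ (s+t)^(p-2) * (s-t)^2)]
    · -- case p ≥ 2 : min = 2^(2-p) side
      have hmin : min (p - 1) (2 ^ (2 - p)) ≤ 2 ^ (2 - p) := min_le_right _ _
      have hhalf : 2 ^ (2 - p) * (s + t) ^ (p - 2) = ((s + t) / 2) ^ (p - 2) := by
        rw [Real.div_rpow hst.le (by norm_num),
          show (2:ℝ) - p = -(p - 2) by ring, Real.rpow_neg (by norm_num), div_eq_mul_inv]
        ring
      have hmono : ((s + t) / 2) ^ (p - 2) ≤ s ^ (p - 2) :=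
        Real.rpow_le_rpow (by linarith) (by linarith) (by linarith)
      have htt : t ^ (p - 2) ≤ s ^ (p - 2) := Real.rpow_le_rpow ht hts (by linarith)
      have h1 : s ^ (p - 2) * s = s ^ (p - 1) := aux_mul hs.le hp
      have h2 : t ^ (p - 2) * t = t ^ (p - 1) := aux_mul ht hp
      -- s^(p-2)*(s-t) ≤ s^(p-1) - t^(p-1)
      have step : s ^ (p - 2) * (s - t) ≤ s ^ (p - 1) - t ^ (p - 1) := by
        nlinarith [mul_le_mul_of_nonneg_right htt ht]
      have hsp : 0 ≤ (s + t) ^ (p - 2) := Real.rpow_nonneg hst.le _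
      nlinarith [mul_le_mul_of_nonneg_right step (by linarith : (0:ℝ) ≤ s - t),
        mul_le_mul_of_nonneg_right hmono (sq_nonneg (s - t)),
        mul_le_mul_of_nonneg_right hmin (by positivity : (0:ℝ) ≤ (s+t)^(p-2) * (s-t)^2)]

lemma L2 {p s t : ℝ} (hp : 1 < p) (hs : 0 ≤ s) (ht : 0 ≤ t) :
    min (p - 1) (2 ^ (2 - p)) * (s + t) ^ (p - 2) * (s - t) ^ 2
      ≤ (s ^ (p - 1) - t ^ (p - 1)) * (s - t) := by
  rcases le_total t s with h | h
  · exact L2' hp ht h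
  · have := L2' hp hs h
    rw [show t + s = s + t by ring] at this
    nlinarith [this]

lemma scalar_key {p s t c : ℝ} (hp : 1 < p) (hs : 0 ≤ s) (ht : 0 ≤ t) (hc : |c| ≤ s * t) :
    min (p - 1) (2 ^ (2 - p)) * (s + t) ^ (p - 2) * (s ^ 2 + t ^ 2 + 2 * c)
      ≤ s ^ p + t ^ p + (s ^ (p - 2) + t ^ (p - 2)) * c := by
  set K := min (p - 1) (2 ^ (2 - p)) with hK
  set M := (s + t) ^ (p - 2) with hM
  have hst : (0:ℝ) ≤ s + t := by linarith
  have h1 : s ^ (p - 2) * s = s ^ (p - 1) := aux_mul hs hp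
  have h2 : t ^ (p - 2) * t = t ^ (p - 1) := aux_mul ht hp
  have h3 : s ^ (p - 1) * s = s ^ p := aux_mul' hs hp
  have h4 : t ^ (p - 1) * t = t ^ p := aux_mul' ht hp
  have hM1 : M * (s + t) = (s + t) ^ (p - 1) := aux_mul hst hp
  -- endpoint c = s*t
  have hplus : K * M * (s ^ 2 + t ^ 2 + 2 * (s * t))
      ≤ s ^ p + t ^ p + (s ^ (p - 2) + t ^ (p - 2)) * (s * t) := by
    have hL1 := mul_le_mul_of_nonneg_right (L1 hp hs ht) hst
    calc K * M * (s ^ 2 + t ^ 2 + 2 * (s * t)) = K * (M * (s + t)) * (s + t) := by ring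
      _ = K * (s + t) ^ (p - 1) * (s + t) := by rw [hM1]
      _ ≤ (s ^ (p - 1) + t ^ (p - 1)) * (s + t) := hL1
      _ = s ^ p + t ^ p + (s ^ (p - 2) + t ^ (p - 2)) * (s * t) := by
          linear_combination h3 + h4 - t * h1 - s * h2
  -- endpoint c = -(s*t)
  have hminus : K * M * (s ^ 2 + t ^ 2 + 2 * (-(s * t)))
      ≤ s ^ p + t ^ p + (s ^ (p - 2) + t ^ (p - 2)) * (-(s * t)) := by
    have hL2 := L2 hp hs ht
    calc K * M * (s ^ 2 + t ^ 2 + 2 * (-(s * t))) = K * M * (s - t) ^ 2 := by ring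
      _ ≤ (s ^ (p - 1) - t ^ (p - 1)) * (s - t) := hL2
      _ = s ^ p + t ^ p + (s ^ (p - 2) + t ^ (p - 2)) * (-(s * t)) := by
          linear_combination h3 + h4 + t * h1 + s * h2
  obtain ⟨hc1, hc2⟩ := abs_le.mp hc
  rcases eq_or_lt_of_le (mul_nonneg hs ht) with h0 | h0
  · have hc0 : c = 0 := le_antisymm (by linarith) (by linarith)
    rw [hc0]
    have : s * t = 0 := h0.symm
    nlinarith [hplus]
  · -- affine interpolation
    set A := s ^ p + t ^ p + (s ^ (p - 2) + t ^ (p - 2)) * c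
        - K * M * (s ^ 2 + t ^ 2 + 2 * c) with hA
    have k1 : 0 ≤ (s * t + c) * ((s ^ p + t ^ p + (s ^ (p - 2) + t ^ (p - 2)) * (s * t))
        - K * M * (s ^ 2 + t ^ 2 + 2 * (s * t))) :=
      mul_nonneg (by linarith) (by linarith)
    have k2 : 0 ≤ (s * t - c) * ((s ^ p + t ^ p + (s ^ (p - 2) + t ^ (p - 2)) * (-(s * t)))
        - K * M * (s ^ 2 + t ^ 2 + 2 * (-(s * t)))) :=
      mul_nonneg (by linarith) (by linarith)
    nlinarith [k1, k2, h0]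

/-- The translated p-Laplacian nonlinearity
`Φ_p(η,ξ) = |η−ξ|^{p−2}(η−ξ) + |ξ|^{p−2}ξ`
(with the convention `|x|^{p−2}x = 0` when `x = 0`). -/
noncomputable def Phi (p : ℝ) {N : ℕ} (η ξ : EuclideanSpace ℝ (Fin N)) :
    EuclideanSpace ℝ (Fin N) :=
  (‖η - ξ‖ ^ (p - 2)) • (η - ξ) + (‖ξ‖ ^ (p - 2)) • ξ

/-- Lemma 3.1, inequality (3.1): for `p > 1` and `|η−ξ| + |ξ| > 0`,
`Φ_p(η,ξ)·η ≥ min{p−1, 2^{2−p}} (|η−ξ| + |ξ|)^{p−2} |η|²`. -/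
theorem phi_inner_lower_bound (p : ℝ) (hp : 1 < p) (N : ℕ) (hN : 1 ≤ N)
    (η ξ : EuclideanSpace ℝ (Fin N)) (h : 0 < ‖η - ξ‖ + ‖ξ‖) :
    min (p - 1) (2 ^ (2 - p)) * (‖η - ξ‖ + ‖ξ‖) ^ (p - 2) * ‖η‖ ^ 2
      ≤ (inner ℝ (Phi p η ξ) η : ℝ) := by
  set a := η - ξ with ha
  have hab : a + ξ = η := sub_add_cancel η ξ
  have hinner : (inner ℝ (Phi p η ξ) η : ℝ)
      = ‖a‖ ^ (p - 2) * (‖a‖ ^ 2 + inner ℝ a ξ) + ‖ξ‖ ^ (p - 2) * ((inner ℝ a ξ : ℝ) + ‖ξ‖ ^ 2) := by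
    rw [Phi, inner_add_left, real_inner_smul_left, real_inner_smul_left, ← ha, ← hab,
      inner_add_right, inner_add_right, real_inner_self_eq_norm_sq,
      real_inner_self_eq_norm_sq, real_inner_comm ξ a]
  have hnorm : ‖η‖ ^ 2 = ‖a‖ ^ 2 + 2 * (inner ℝ a ξ : ℝ) + ‖ξ‖ ^ 2 := by
    rw [← hab, @norm_add_sq_real]
  have hc : |(inner ℝ a ξ : ℝ)| ≤ ‖a‖ * ‖ξ‖ := abs_real_inner_le_norm a ξ
  have key := scalar_key hp (norm_nonneg a) (norm_nonneg ξ) hc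
  have h1 : ‖a‖ ^ (p - 2) * ‖a‖ ^ 2 = ‖a‖ ^ p := aux_mul2 (norm_nonneg a) hp
  have h2 : ‖ξ‖ ^ (p - 2) * ‖ξ‖ ^ 2 = ‖ξ‖ ^ p := aux_mul2 (norm_nonneg ξ) hp
  rw [hinner, hnorm]
  nlinarith [key]
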